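/- Let f be a probability density on ℝ with f > 0 on the open interval (a,b), f = 0 outside (a,b), where −∞ < a < b < ∞, and f continuous on (a,b). Fix 0 < λ < 1 and define the convex combination estimator θ_{CC,λ,n} := λ·(min_i x_i − a) + (1−λ)·(max_i x_i − b). Then for every θ ∈ ℝ and every ε with 0 < ε < min{λ, 1−λ}·(b−a), the limits defining the rates exist and β^+(θ_{CC,λ},θ,ε) = −log ∫_{a+ε/λ}^b f(x) dx and β^−(θ_{CC,λ},θ,ε) = −log ∫_a^{b−ε/(1−λ)} f(x) dx. -/

import Mathlib

open MeasureTheory Filter Set Topology ENNReal NNReal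

/-- `-log x`, with the convention `-log 0 = ∞`, as a map `ℝ≥0∞ → ℝ≥0∞`. -/
noncomputable def negLog (x : ℝ≥0∞) : ℝ≥0∞ :=
  if x = 0 then ⊤ else ENNReal.ofReal (-Real.log x.toReal)

/-- The `n`-fold product (i.i.d.) measure of `p`. -/
noncomputable def prodMeas {Ω : Type*} [MeasurableSpace Ω] (p : Measure Ω) (n : ℕ) :
    Measure (Fin n → Ω) :=
  Measure.pi fun _ => p

/-- `β⁺(T,θ,ε) = liminf (-1/n) log p_θ^n { T_n > θ + ε }`. -/
noncomputable def betaPlus {Ω : Type*} [MeasurableSpace Ω] (p : ℝ → Measure Ω)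
    (T : (n : ℕ) → (Fin n → Ω) → ℝ) (θ ε : ℝ) : ℝ≥0∞ :=
  Filter.atTop.liminf fun n : ℕ =>
    negLog (prodMeas (p θ) n {x | θ + ε < T n x}) / (n : ℝ≥0∞)

/-- `β⁻(T,θ,ε) = liminf (-1/n) log p_θ^n { T_n < θ - ε }`. -/
noncomputable def betaMinus {Ω : Type*} [MeasurableSpace Ω] (p : ℝ → Measure Ω)
    (T : (n : ℕ) → (Fin n → Ω) → ℝ) (θ ε : ℝ) : ℝ≥0∞ :=
  Filter.atTop.liminf fun n : ℕ =>
    negLog (prodMeas (p θ) n {x | T n x < θ - ε}) / (n : ℝ≥0∞)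

/-- The location shift family: `p_θ` has density `x ↦ f (x - θ)` w.r.t. Lebesgue measure. -/
noncomputable def locMeasure (f : ℝ → ℝ) (θ : ℝ) : Measure ℝ :=
  volume.withDensity fun x => ENNReal.ofReal (f (x - θ))

/-- The estimator `θ̲_n = min_i x_i - a`. -/
noncomputable def lowEst (a : ℝ) (n : ℕ) (x : Fin n → ℝ) : ℝ := (⨅ i, x i) - a

/-- The estimator `θ̄_n = max_i x_i - b`. -/
noncomputable def highEst (b : ℝ) (n : ℕ) (x : Fin n → ℝ) : ℝ := (⨆ i, x i) - b

/-- The convex combination estimator `θ_{CC,λ,n} = λ(min_i x_i - a) + (1-λ)(max_i x_i - b)`. -/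
noncomputable def ccEst (a b lam : ℝ) (n : ℕ) (x : Fin n → ℝ) : ℝ :=
  lam * ((⨅ i, x i) - a) + (1 - lam) * ((⨆ i, x i) - b)


lemma negLog_ne_top {x : ℝ≥0∞} (hx : x ≠ 0) : negLog x ≠ ⊤ := by
  simp [negLog, hx]

lemma negLog_of_ne_zero {x : ℝ≥0∞} (hx : x ≠ 0) :
    negLog x = ENNReal.ofReal (-Real.log x.toReal) := if_neg hx

lemma negLog_anti {x y : ℝ≥0∞} (hxy : x ≤ y) : negLog y ≤ negLog x := by
  rcases eq_or_ne x 0 with rfl | hx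
  · simp [negLog]
  have hy : y ≠ 0 := fun h => hx (le_antisymm (h ▸ hxy) (zero_le))
  rw [negLog_of_ne_zero hx, negLog_of_ne_zero hy]
  rcases eq_or_ne y ⊤ with rfl | hytop
  · simp
  have hxtop : x ≠ ⊤ := fun h => hytop (top_le_iff.mp (h ▸ hxy))
  apply ENNReal.ofReal_le_ofReal
  have h1 : 0 < x.toReal := ENNReal.toReal_pos hx hxtop
  have h2 : x.toReal ≤ y.toReal := ENNReal.toReal_mono hytop hxy
  linarith [Real.log_le_log h1 h2]

lemma negLog_mul {x y : ℝ≥0∞} (hx : x ≠ 0) (hx1 : x ≤ 1) (hy : y ≠ 0) (hy1 : y ≤ 1) :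
    negLog (x * y) = negLog x + negLog y := by
  have hxt : x ≠ ⊤ := (hx1.trans_lt one_lt_top).ne
  have hyt : y ≠ ⊤ := (hy1.trans_lt one_lt_top).ne
  have hxy : x * y ≠ 0 := mul_ne_zero hx hy
  have hx0 : 0 < x.toReal := ENNReal.toReal_pos hx hxt
  have hy0 : 0 < y.toReal := ENNReal.toReal_pos hy hyt
  have hx1' : x.toReal ≤ 1 := by
    rw [← ENNReal.toReal_one]; exact ENNReal.toReal_mono one_ne_top hx1
  have hy1' : y.toReal ≤ 1 := by
    rw [← ENNReal.toReal_one]; exact ENNReal.toReal_mono one_ne_top hy1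
  rw [negLog_of_ne_zero hx, negLog_of_ne_zero hy, negLog_of_ne_zero hxy,
    ENNReal.toReal_mul, Real.log_mul hx0.ne' hy0.ne', neg_add,
    ENNReal.ofReal_add (by simpa using Real.log_nonpos hx0.le hx1')
      (by simpa using Real.log_nonpos hy0.le hy1')]

lemma negLog_pow {q : ℝ≥0∞} (hq : q ≠ 0) (hq1 : q ≤ 1) (m : ℕ) :
    negLog (q ^ m) = m * negLog q := by
  induction m with
  | zero => simp [negLog]
  | succ k ih =>
      rw [pow_succ, negLog_mul (pow_ne_zero k hq) (pow_le_one' hq1 k) hq hq1, ih]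
      push_cast
      ring

lemma negLog_ofReal_pos {t : ℝ} (ht : 0 < t) :
    negLog (ENNReal.ofReal t) = ENNReal.ofReal (-Real.log t) := by
  have : ENNReal.ofReal t ≠ 0 := by simp [ENNReal.ofReal_eq_zero, not_le, ht]
  rw [negLog_of_ne_zero this, ENNReal.toReal_ofReal ht.le]


lemma exists_iInf_eq {n : ℕ} [Nonempty (Fin n)] (x : Fin n → ℝ) : ∃ i, (⨅ j, x j) = x i := by
  obtain ⟨i, hi⟩ := Finite.exists_min x
  exact ⟨i, le_antisymm (ciInf_le (Finite.bddBelow_range x) i) (le_ciInf hi)⟩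

lemma exists_iSup_eq {n : ℕ} [Nonempty (Fin n)] (x : Fin n → ℝ) : ∃ i, (⨆ j, x j) = x i := by
  obtain ⟨i, hi⟩ := Finite.exists_max x
  exact ⟨i, le_antisymm (ciSup_le hi) (le_ciSup (Finite.bddAbove_range x) i)⟩

lemma tendsto_avg {A B : ℝ≥0∞} (hA : A ≠ ⊤) (hB : B ≠ ⊤) :
    Tendsto (fun m : ℕ => (A + m * B) / ((m : ℝ≥0∞) + 1)) atTop (𝓝 B) := by
  have hre : Tendsto (fun m : ℕ => (A.toReal + m * B.toReal) / ((m : ℝ) + 1)) atTop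
      (𝓝 B.toReal) := by
    have h0 : Tendsto (fun m : ℕ => (A.toReal - B.toReal) / ((m : ℝ) + 1) + B.toReal) atTop
        (𝓝 (0 + B.toReal)) := by
      apply Tendsto.add _ tendsto_const_nhds
      have := (tendsto_const_div_atTop_nhds_zero_nat (A.toReal - B.toReal)).comp
        (tendsto_add_atTop_nat 1)
      apply this.congr
      intro m
      simp [Function.comp]
    rw [zero_add] at h0
    apply h0.congr
    intro m
    have hm : ((m : ℝ) + 1) ≠ 0 := by positivity
    field_simp
    ring
  have hco : Tendsto (fun m : ℕ => ENNReal.ofReal ((A.toReal + m * B.toReal) / ((m : ℝ) + 1)))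
      atTop (𝓝 (ENNReal.ofReal B.toReal)) :=
    (ENNReal.continuous_ofReal.tendsto _).comp hre
  rw [ENNReal.ofReal_toReal hB] at hco
  apply hco.congr
  intro m
  rw [ENNReal.ofReal_div_of_pos (by positivity), ENNReal.ofReal_add (by positivity)
    (by positivity), ENNReal.ofReal_mul (by positivity), ENNReal.ofReal_add (by positivity)
    zero_le_one]
  simp [ENNReal.ofReal_toReal hA, ENNReal.ofReal_toReal hB, ENNReal.ofReal_natCast]

lemma rate_tendsto {P : Measure ℝ} [IsProbabilityMeasure P]
    (E : ∀ n : ℕ, Set (Fin n → ℝ))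
    {G : Set ℝ} (hG : MeasurableSet G) (hG1 : P G = 1)
    {S : Set ℝ} (hPS : P S ≠ 0)
    (hsub : ∀ n (x : Fin n → ℝ), x ∈ E n → (∀ i, x i ∈ G) → ∀ i, x i ∈ S)
    (hlow : ∀ η : ℝ≥0∞, 0 < η → ∃ C T : Set ℝ, C ⊆ T ∧ P C ≠ 0 ∧
      negLog (P T) ≤ negLog (P S) + η ∧
      ∀ (m : ℕ) (x : Fin (m + 1) → ℝ), x 0 ∈ C → (∀ i, x i ∈ T) → x ∈ E (m + 1)) :
    Tendsto (fun n : ℕ => negLog (prodMeas P n (E n)) / (n : ℝ≥0∞)) atTop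
      (𝓝 (negLog (P S))) := by
  set L := negLog (P S) with hLdef
  have hLt : L ≠ ⊤ := negLog_ne_top hPS
  have hPS1 : P S ≤ 1 := prob_le_one
  have hup : ∀ n : ℕ, prodMeas P n (E n) ≤ P S ^ n := by
    intro n
    have h1 : E n ⊆ (univ.pi fun _ : Fin n => S) ∪ (univ.pi fun _ : Fin n => G)ᶜ := by
      intro x hx
      by_cases h : ∀ i, x i ∈ G
      · exact Or.inl (by rw [Set.mem_univ_pi]; exact fun i => hsub n x hx h i)
      · exact Or.inr (by rw [Set.mem_compl_iff, Set.mem_univ_pi]; exact h)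
    have h3 : prodMeas P n (univ.pi fun _ : Fin n => G)ᶜ = 0 := by
      have hall : prodMeas P n (univ.pi fun _ : Fin n => G) = 1 := by
        rw [prodMeas, Measure.pi_pi]; simp [hG1]
      have huniv : prodMeas P n (univ : Set (Fin n → ℝ)) = 1 := by
        rw [prodMeas, Measure.pi_univ]
        simp
      rw [measure_compl (MeasurableSet.univ_pi fun _ => hG) (by rw [hall]; exact one_ne_top),
        hall, huniv, tsub_self]
    calc prodMeas P n (E n)
        ≤ prodMeas P n ((univ.pi fun _ : Fin n => S) ∪ (univ.pi fun _ : Fin n => G)ᶜ) :=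
          measure_mono h1
      _ ≤ prodMeas P n (univ.pi fun _ : Fin n => S)
            + prodMeas P n (univ.pi fun _ : Fin n => G)ᶜ := measure_union_le _ _
      _ = P S ^ n := by rw [h3, add_zero, prodMeas, Measure.pi_pi]; simp
  have hliminf : L ≤ atTop.liminf (fun n : ℕ => negLog (prodMeas P n (E n)) / n) := by
    refine Filter.le_liminf_of_le (by isBoundedDefault) ?_
    filter_upwards [eventually_ge_atTop 1] with n hn
    have hne : (n : ℝ≥0∞) ≠ 0 := Nat.cast_ne_zero.2 (by omega)
    have h := negLog_anti (hup n)
    rw [negLog_pow hPS hPS1] at h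
    calc L = ((n : ℝ≥0∞) * L) / n := by
          rw [mul_comm, mul_div_assoc, ENNReal.div_self hne (natCast_ne_top n), mul_one]
      _ ≤ _ := ENNReal.div_le_div_right h n
  have hlimsup : atTop.limsup (fun n : ℕ => negLog (prodMeas P n (E n)) / n) ≤ L := by
    apply ENNReal.le_of_forall_pos_le_add
    intro η hη _
    obtain ⟨C, T, hCT, hC0, hTle, hmem⟩ := hlow η (by exact_mod_cast hη)
    have hC1 : P C ≤ 1 := prob_le_one
    have hT0 : P T ≠ 0 := fun h => hC0 (le_antisymm (h ▸ measure_mono hCT) (zero_le))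
    have hT1 : P T ≤ 1 := prob_le_one
    set A := negLog (P C) with hAdef
    set B := negLog (P T) with hBdef
    have hlow' : ∀ m : ℕ, P C * P T ^ m ≤ prodMeas P (m + 1) (E (m + 1)) := by
      intro m
      have hrect : (univ.pi fun i : Fin (m + 1) => if i = 0 then C else T) ⊆ E (m + 1) := by
        intro x hx
        rw [Set.mem_univ_pi] at hx
        apply hmem m x
        · have h0 := hx 0; rwa [if_pos rfl] at h0
        · intro i
          rcases eq_or_ne i 0 with rfl | hi
          · exact hCT (by have h0 := hx 0; rwa [if_pos rfl] at h0)
          · have h0 := hx i; rwa [if_neg hi] at h0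
      calc P C * P T ^ m
          = prodMeas P (m + 1) (univ.pi fun i : Fin (m + 1) => if i = 0 then C else T) := by
            rw [prodMeas, Measure.pi_pi, Fin.prod_univ_succ]
            simp [Fin.succ_ne_zero]
        _ ≤ _ := measure_mono hrect
    have hwle : ∀ᶠ n in atTop, negLog (prodMeas P n (E n)) / (n : ℝ≥0∞)
        ≤ (A + ((n - 1 : ℕ) : ℝ≥0∞) * B) / (((n - 1 : ℕ) : ℝ≥0∞) + 1) := by
      filter_upwards [eventually_ge_atTop 1] with n hn
      obtain ⟨m, rfl⟩ : ∃ m, n = m + 1 := ⟨n - 1, by omega⟩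
      have h : negLog (prodMeas P (m + 1) (E (m + 1))) ≤ A + m * B := by
        have h2 := negLog_anti (hlow' m)
        rwa [negLog_mul hC0 hC1 (pow_ne_zero m hT0) (pow_le_one' hT1 m),
          negLog_pow hT0 hT1] at h2
      have hcast : ((m + 1 : ℕ) : ℝ≥0∞) = ((m + 1 - 1 : ℕ) : ℝ≥0∞) + 1 := by
        simp
      rw [hcast]
      simp only [Nat.add_sub_cancel]
      exact ENNReal.div_le_div_right h _
    have hwt : Tendsto (fun n : ℕ => (A + ((n - 1 : ℕ) : ℝ≥0∞) * B) / (((n - 1 : ℕ) : ℝ≥0∞) + 1))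
        atTop (𝓝 B) :=
      (tendsto_avg (negLog_ne_top hC0) (negLog_ne_top hT0)).comp (tendsto_sub_atTop_nat 1)
    calc atTop.limsup (fun n : ℕ => negLog (prodMeas P n (E n)) / n)
        ≤ atTop.limsup (fun n : ℕ =>
            (A + ((n - 1 : ℕ) : ℝ≥0∞) * B) / (((n - 1 : ℕ) : ℝ≥0∞) + 1)) :=
          limsup_le_limsup hwle
      _ = B := hwt.limsup_eq
      _ ≤ L + η := hTle
  exact tendsto_of_le_liminf_of_limsup_le hliminf hlimsup

lemma locMeasure_Ioo {f : ℝ → ℝ} (hf_meas : Measurable f) (hf_nonneg : ∀ x, 0 ≤ f x)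
    (hInt : Integrable f) (θ : ℝ) {u v : ℝ} (huv : u ≤ v) :
    locMeasure f θ (Ioo (u + θ) (v + θ)) = ENNReal.ofReal (∫ x in u..v, f x) := by
  rw [locMeasure, withDensity_apply _ measurableSet_Ioo]
  have hpre : Ioo (u + θ) (v + θ) = (fun x : ℝ => x - θ) ⁻¹' Ioo u v := by
    ext x
    simp only [Set.mem_Ioo, Set.mem_preimage]
    constructor <;> rintro ⟨h1, h2⟩ <;> constructor <;> linarith
  rw [hpre, (measurePreserving_sub_right volume θ).setLIntegral_comp_preimage measurableSet_Ioo
    hf_meas.ennreal_ofReal, intervalIntegral.integral_of_le huv, integral_Ioc_eq_integral_Ioo,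
    ofReal_integral_eq_lintegral_ofReal hInt.integrableOn (ae_of_all _ hf_nonneg)]

lemma locMeasure_univ {f : ℝ → ℝ} (hf_meas : Measurable f) (hf_nonneg : ∀ x, 0 ≤ f x)
    (hInt : Integrable f) (θ : ℝ) :
    locMeasure f θ (univ : Set ℝ) = ENNReal.ofReal (∫ x, f x) := by
  rw [locMeasure, withDensity_apply _ MeasurableSet.univ, Measure.restrict_univ,
    (measurePreserving_sub_right volume θ).lintegral_comp hf_meas.ennreal_ofReal,
    ofReal_integral_eq_lintegral_ofReal hInt (ae_of_all _ hf_nonneg)]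


set_option maxHeartbeats 1000000

/-- Lemma 2 of Section 5 of the paper: for a density `f` supported exactly on `(a,b)` and
continuous there, the convex combination estimator satisfies, for
`0 < ε < min{λ,1-λ}(b-a)`, that the limits defining its rates exist with
`β⁺(θ_{CC,λ},θ,ε) = -log ∫_{a+ε/λ}^b f` and `β⁻(θ_{CC,λ},θ,ε) = -log ∫_a^{b-ε/(1-λ)} f`. -/
theorem stmt11 (f : ℝ → ℝ) (a b : ℝ) (hab : a < b)
    (hf_meas : Measurable f)
    (hf_pos : ∀ x ∈ Ioo a b, 0 < f x) (hf_zero : ∀ x ∉ Ioo a b, f x = 0)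
    (hf_cont : ContinuousOn f (Ioo a b))
    (hf_int : ∫ x, f x = 1)
    (lam : ℝ) (hlam : lam ∈ Ioo (0 : ℝ) 1)
    (θ ε : ℝ) (hε : 0 < ε) (hεb : ε < min lam (1 - lam) * (b - a)) :
    Tendsto (fun n : ℕ =>
        negLog (prodMeas (locMeasure f θ) n {x | θ + ε < ccEst a b lam n x}) / (n : ℝ≥0∞))
      atTop (𝓝 (negLog (ENNReal.ofReal (∫ x in (a + ε / lam)..b, f x)))) ∧
    Tendsto (fun n : ℕ =>
        negLog (prodMeas (locMeasure f θ) n {x | ccEst a b lam n x < θ - ε}) / (n : ℝ≥0∞))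
      atTop (𝓝 (negLog (ENNReal.ofReal (∫ x in a..(b - ε / (1 - lam)), f x)))) ∧
    betaPlus (locMeasure f) (ccEst a b lam) θ ε
        = negLog (ENNReal.ofReal (∫ x in (a + ε / lam)..b, f x)) ∧
    betaMinus (locMeasure f) (ccEst a b lam) θ ε
        = negLog (ENNReal.ofReal (∫ x in a..(b - ε / (1 - lam)), f x)) := by
  obtain ⟨hl0, hl1⟩ := hlam
  have h1l : 0 < 1 - lam := by linarith
  have hba : 0 < b - a := by linarith
  have hf_nonneg : ∀ x, 0 ≤ f x := by
    intro x
    by_cases hx : x ∈ Ioo a b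
    · exact (hf_pos x hx).le
    · rw [hf_zero x hx]
  have hInt : Integrable f := integrable_of_integral_eq_one hf_int
  have hIIab : ∀ u v : ℝ, IntervalIntegrable f volume u v := fun u v => hInt.intervalIntegrable
  have hε_lam : ε / lam < b - a := by
    rw [div_lt_iff₀ hl0]
    calc ε < min lam (1 - lam) * (b - a) := hεb
      _ ≤ lam * (b - a) := mul_le_mul_of_nonneg_right (min_le_left _ _) hba.le
      _ = (b - a) * lam := mul_comm _ _
  have hε_1l : ε / (1 - lam) < b - a := by
    rw [div_lt_iff₀ h1l]
    calc ε < min lam (1 - lam) * (b - a) := hεb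
      _ ≤ (1 - lam) * (b - a) := mul_le_mul_of_nonneg_right (min_le_right _ _) hba.le
      _ = (b - a) * (1 - lam) := mul_comm _ _
  have hεlam_pos : 0 < ε / lam := div_pos hε hl0
  have hε1l_pos : 0 < ε / (1 - lam) := div_pos hε h1l
  have hεlam : lam * (ε / lam) = ε := by field_simp
  have hε1l : (1 - lam) * (ε / (1 - lam)) = ε := by field_simp
  set P := locMeasure f θ with hPdef
  have hPIoo : ∀ u v : ℝ, u ≤ v → P (Ioo (u + θ) (v + θ)) = ENNReal.ofReal (∫ x in u..v, f x) :=
    fun u v huv => locMeasure_Ioo hf_meas hf_nonneg hInt θ huv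
  haveI hPprob : IsProbabilityMeasure P := by
    constructor
    rw [hPdef, locMeasure_univ hf_meas hf_nonneg hInt θ, hf_int, ENNReal.ofReal_one]
  -- the support interval
  have hG1 : P (Ioo (a + θ) (b + θ)) = 1 := by
    rw [hPIoo a b hab.le, intervalIntegral.integral_of_le hab.le,
      setIntegral_eq_integral_of_forall_compl_eq_zero
        (fun x hx => hf_zero x (fun hx' => hx (Ioo_subset_Ioc_self hx'))),
      hf_int, ENNReal.ofReal_one]
  -- positivity of interval masses
  have hPpos : ∀ u v : ℝ, a ≤ u → u < v → v ≤ b → P (Ioo (u + θ) (v + θ)) ≠ 0 := by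
    intro u v hau huv hvb
    rw [hPIoo u v huv.le, Ne, ENNReal.ofReal_eq_zero, not_le]
    exact intervalIntegral.intervalIntegral_pos_of_pos_on (hIIab u v)
      (fun x hx => hf_pos x ⟨lt_of_le_of_lt hau hx.1, lt_of_lt_of_le hx.2 hvb⟩) huv
  -- continuity of interval masses
  have hFcont : Continuous fun t : ℝ => ∫ x in t..b, f x := by
    have h := (intervalIntegral.continuous_primitive (fun u v => hIIab u v) b).neg
    apply h.congr
    intro t
    show -(∫ x in b..t, f x) = _
    rw [← intervalIntegral.integral_symm]
  have hFcont' : Continuous fun t : ℝ => ∫ x in a..t, f x :=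
    intervalIntegral.continuous_primitive (fun u v => hIIab u v) a
  -- ********** the beta-plus part **********
  have habe : a + ε / lam < b := by linarith
  have hIp : 0 < ∫ x in (a + ε / lam)..b, f x :=
    intervalIntegral.intervalIntegral_pos_of_pos_on (hIIab _ _)
      (fun x hx => hf_pos x ⟨by linarith [hx.1], hx.2⟩) habe
  have hSp : P (Ioo ((a + ε / lam) + θ) (b + θ))
      = ENNReal.ofReal (∫ x in (a + ε / lam)..b, f x) := hPIoo _ _ habe.le
  have hSp0 : P (Ioo ((a + ε / lam) + θ) (b + θ)) ≠ 0 :=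
    hPpos _ _ (by linarith) habe le_rfl
  have htplus : Tendsto (fun n : ℕ =>
      negLog (prodMeas P n {x | θ + ε < ccEst a b lam n x}) / (n : ℝ≥0∞)) atTop
      (𝓝 (negLog (P (Ioo ((a + ε / lam) + θ) (b + θ))))) := by
    apply rate_tendsto _ measurableSet_Ioo hG1 hSp0
    · -- inclusion in the rectangle
      intro n x hx hall i
      haveI : Nonempty (Fin n) := ⟨i⟩
      obtain ⟨i1, hi1⟩ := exists_iSup_eq x
      have hsup_lt : (⨆ j, x j) < b + θ := by rw [hi1]; exact (hall i1).2
      have hccx : θ + ε < lam * ((⨅ j, x j) - a) + (1 - lam) * ((⨆ j, x j) - b) := hx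
      have hinf_gt : a + ε / lam + θ < ⨅ j, x j := by
        have e1 : (1 - lam) * ((⨆ j, x j) - b) < (1 - lam) * θ :=
          mul_lt_mul_of_pos_left (by linarith) h1l
        have e2 : lam * (ε / lam + θ) < lam * ((⨅ j, x j) - a) := by
          have e2' : lam * (ε / lam + θ) = ε + lam * θ := by rw [mul_add, hεlam]
          rw [e2']; linarith
        have e3 := (mul_lt_mul_iff_right₀ hl0).mp e2
        linarith
      exact ⟨lt_of_lt_of_le hinf_gt (ciInf_le (Finite.bddBelow_range x) i), (hall i).2⟩
    · -- the lower rectangles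
      intro η hη
      have hgpos : 0 < b - a - ε / lam := by linarith
      have hδex : ∃ δ : ℝ, 0 < δ ∧ δ < (1 - lam) * (b - a - ε / lam) ∧
          negLog (ENNReal.ofReal (∫ x in (a + ε / lam + δ)..b, f x))
            ≤ negLog (P (Ioo ((a + ε / lam) + θ) (b + θ))) + η := by
        rw [hSp]
        have htend : Tendsto (fun δ : ℝ => ∫ x in (a + ε / lam + δ)..b, f x) (𝓝[>] (0 : ℝ))
            (𝓝 (∫ x in (a + ε / lam)..b, f x)) := by
          have h1 : Tendsto (fun δ : ℝ => a + ε / lam + δ) (𝓝[>] (0 : ℝ)) (𝓝 (a + ε / lam)) := by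
            have h2 : Tendsto (fun δ : ℝ => a + ε / lam + δ) (𝓝 (0 : ℝ))
                (𝓝 (a + ε / lam + 0)) := (continuous_const.add continuous_id).tendsto 0
            rw [add_zero] at h2
            exact h2.mono_left nhdsWithin_le_nhds
          exact (hFcont.tendsto _).comp h1
        have hpos_ev : ∀ᶠ δ : ℝ in 𝓝[>] 0, 0 < ∫ x in (a + ε / lam + δ)..b, f x :=
          htend.eventually (eventually_gt_nhds hIp)
        have hco : Tendsto (fun s : ℝ => ENNReal.ofReal (-Real.log s))
            (𝓝 (∫ x in (a + ε / lam)..b, f x))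
            (𝓝 (ENNReal.ofReal (-Real.log (∫ x in (a + ε / lam)..b, f x)))) := by
          exact (ENNReal.continuous_ofReal.tendsto _).comp
            ((Real.continuousAt_log hIp.ne').neg.tendsto)
        have hnl : Tendsto
            (fun δ : ℝ => negLog (ENNReal.ofReal (∫ x in (a + ε / lam + δ)..b, f x)))
            (𝓝[>] (0 : ℝ))
            (𝓝 (negLog (ENNReal.ofReal (∫ x in (a + ε / lam)..b, f x)))) := by
          rw [negLog_ofReal_pos hIp]
          apply Filter.Tendsto.congr' _ (hco.comp htend)
          filter_upwards [hpos_ev] with δ hδ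
          exact (negLog_ofReal_pos hδ).symm
        have hLpt : negLog (ENNReal.ofReal (∫ x in (a + ε / lam)..b, f x)) ≠ ⊤ :=
          negLog_ne_top (by simp [ENNReal.ofReal_eq_zero, not_le, hIp])
        have hev1 := hnl.eventually (eventually_lt_nhds (ENNReal.lt_add_right hLpt hη.ne'))
        have hev2 : Ioo (0 : ℝ) ((1 - lam) * (b - a - ε / lam)) ∈ 𝓝[>] (0 : ℝ) :=
          Ioo_mem_nhdsGT_of_mem ⟨le_refl 0, by positivity⟩
        obtain ⟨δ, h1, h2⟩ := (hev1.and (eventually_of_mem hev2 (fun y hy => hy))).exists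
        exact ⟨δ, h2.1, h2.2, h1.le⟩
      obtain ⟨δ, hδ0, hδm, hδL⟩ := hδex
      set δ' := lam * δ / (1 - lam) with hδ'def
      have hδ'0 : 0 < δ' := by positivity
      have hδ'eq : (1 - lam) * δ' = lam * δ := by
        rw [hδ'def]; field_simp
      have hsum : a + ε / lam + δ + δ' < b := by
        have e : (1 - lam) * (δ + δ') < (1 - lam) * (b - a - ε / lam) := by
          have e' : (1 - lam) * (δ + δ') = δ := by rw [mul_add, hδ'eq]; ring
          rw [e']; exact hδm
        have := (mul_lt_mul_iff_right₀ h1l).mp e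
        linarith
      refine ⟨Ioo ((b - δ') + θ) (b + θ), Ioo ((a + ε / lam + δ) + θ) (b + θ),
        Ioo_subset_Ioo (by linarith) le_rfl,
        hPpos _ _ (by linarith) (by linarith) le_rfl, ?_, ?_⟩
      · rw [hPIoo _ _ (by linarith : a + ε / lam + δ ≤ b)]
        exact hδL
      · intro m x hx0 hxT
        obtain ⟨i0, hi0⟩ := exists_iInf_eq x
        have hinf : a + ε / lam + δ + θ < ⨅ j, x j := by
          rw [hi0]; have := (hxT i0).1; linarith
        have hsup : (b - δ') + θ < ⨆ j, x j :=
          lt_of_lt_of_le hx0.1 (le_ciSup (Finite.bddAbove_range x) 0)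
        show θ + ε < lam * ((⨅ j, x j) - a) + (1 - lam) * ((⨆ j, x j) - b)
        have e1 : lam * (ε / lam + δ + θ) < lam * ((⨅ j, x j) - a) :=
          mul_lt_mul_of_pos_left (by linarith) hl0
        have e1' : lam * (ε / lam + δ + θ) = ε + lam * δ + lam * θ := by
          rw [mul_add, mul_add, hεlam]
        have e2 : (1 - lam) * (θ - δ') < (1 - lam) * ((⨆ j, x j) - b) :=
          mul_lt_mul_of_pos_left (by linarith) h1l
        have e2' : (1 - lam) * (θ - δ') = (1 - lam) * θ - lam * δ := by
          rw [mul_sub, hδ'eq]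
        nlinarith [e1, e1', e2, e2']
  rw [hSp] at htplus
  -- ********** the beta-minus part **********
  have habe' : a < b - ε / (1 - lam) := by linarith
  have hIm : 0 < ∫ x in a..(b - ε / (1 - lam)), f x :=
    intervalIntegral.intervalIntegral_pos_of_pos_on (hIIab _ _)
      (fun x hx => hf_pos x ⟨hx.1, by linarith [hx.2]⟩) habe'
  have hSm : P (Ioo (a + θ) ((b - ε / (1 - lam)) + θ))
      = ENNReal.ofReal (∫ x in a..(b - ε / (1 - lam)), f x) := hPIoo _ _ habe'.le
  have hSm0 : P (Ioo (a + θ) ((b - ε / (1 - lam)) + θ)) ≠ 0 :=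
    hPpos _ _ le_rfl habe' (by linarith)
  have htminus : Tendsto (fun n : ℕ =>
      negLog (prodMeas P n {x | ccEst a b lam n x < θ - ε}) / (n : ℝ≥0∞)) atTop
      (𝓝 (negLog (P (Ioo (a + θ) ((b - ε / (1 - lam)) + θ))))) := by
    apply rate_tendsto _ measurableSet_Ioo hG1 hSm0
    · intro n x hx hall i
      haveI : Nonempty (Fin n) := ⟨i⟩
      obtain ⟨i0, hi0⟩ := exists_iInf_eq x
      have hinf_gt : a + θ < ⨅ j, x j := by rw [hi0]; exact (hall i0).1
      have hccx : lam * ((⨅ j, x j) - a) + (1 - lam) * ((⨆ j, x j) - b) < θ - ε := hx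
      have hsup_lt : (⨆ j, x j) < (b - ε / (1 - lam)) + θ := by
        have e1 : lam * θ < lam * ((⨅ j, x j) - a) :=
          mul_lt_mul_of_pos_left (by linarith) hl0
        have e2 : (1 - lam) * (⨆ j, x j) < (1 - lam) * ((b - ε / (1 - lam)) + θ) := by
          have e2' : (1 - lam) * ((b - ε / (1 - lam)) + θ)
              = (1 - lam) * b - ε + (1 - lam) * θ := by rw [mul_add, mul_sub, hε1l]
          rw [e2']; nlinarith [e1, hccx]
        exact (mul_lt_mul_iff_right₀ h1l).mp e2
      exact ⟨(hall i).1, lt_of_le_of_lt (le_ciSup (Finite.bddAbove_range x) i) hsup_lt⟩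
    · intro η hη
      have hgpos : 0 < b - a - ε / (1 - lam) := by linarith
      have hδex : ∃ δ : ℝ, 0 < δ ∧ δ < lam * (b - a - ε / (1 - lam)) ∧
          negLog (ENNReal.ofReal (∫ x in a..(b - ε / (1 - lam) - δ), f x))
            ≤ negLog (P (Ioo (a + θ) ((b - ε / (1 - lam)) + θ))) + η := by
        rw [hSm]
        have htend : Tendsto (fun δ : ℝ => ∫ x in a..(b - ε / (1 - lam) - δ), f x)
            (𝓝[>] (0 : ℝ)) (𝓝 (∫ x in a..(b - ε / (1 - lam)), f x)) := by
          have h1 : Tendsto (fun δ : ℝ => b - ε / (1 - lam) - δ) (𝓝[>] (0 : ℝ))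
              (𝓝 (b - ε / (1 - lam))) := by
            have h2 : Tendsto (fun δ : ℝ => b - ε / (1 - lam) - δ) (𝓝 (0 : ℝ))
                (𝓝 (b - ε / (1 - lam) - 0)) := (continuous_const.sub continuous_id).tendsto 0
            rw [sub_zero] at h2
            exact h2.mono_left nhdsWithin_le_nhds
          exact (hFcont'.tendsto _).comp h1
        have hpos_ev : ∀ᶠ δ : ℝ in 𝓝[>] 0, 0 < ∫ x in a..(b - ε / (1 - lam) - δ), f x :=
          htend.eventually (eventually_gt_nhds hIm)
        have hco : Tendsto (fun s : ℝ => ENNReal.ofReal (-Real.log s))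
            (𝓝 (∫ x in a..(b - ε / (1 - lam)), f x))
            (𝓝 (ENNReal.ofReal (-Real.log (∫ x in a..(b - ε / (1 - lam)), f x)))) := by
          exact (ENNReal.continuous_ofReal.tendsto _).comp
            ((Real.continuousAt_log hIm.ne').neg.tendsto)
        have hnl : Tendsto
            (fun δ : ℝ => negLog (ENNReal.ofReal (∫ x in a..(b - ε / (1 - lam) - δ), f x)))
            (𝓝[>] (0 : ℝ))
            (𝓝 (negLog (ENNReal.ofReal (∫ x in a..(b - ε / (1 - lam)), f x)))) := by
          rw [negLog_ofReal_pos hIm]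
          apply Filter.Tendsto.congr' _ (hco.comp htend)
          filter_upwards [hpos_ev] with δ hδ
          exact (negLog_ofReal_pos hδ).symm
        have hLmt : negLog (ENNReal.ofReal (∫ x in a..(b - ε / (1 - lam)), f x)) ≠ ⊤ :=
          negLog_ne_top (by simp [ENNReal.ofReal_eq_zero, not_le, hIm])
        have hev1 := hnl.eventually (eventually_lt_nhds (ENNReal.lt_add_right hLmt hη.ne'))
        have hev2 : Ioo (0 : ℝ) (lam * (b - a - ε / (1 - lam))) ∈ 𝓝[>] (0 : ℝ) :=
          Ioo_mem_nhdsGT_of_mem ⟨le_refl 0, by positivity⟩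
        obtain ⟨δ, h1, h2⟩ := (hev1.and (eventually_of_mem hev2 (fun y hy => hy))).exists
        exact ⟨δ, h2.1, h2.2, h1.le⟩
      obtain ⟨δ, hδ0, hδm, hδL⟩ := hδex
      set δ' := (1 - lam) * δ / lam with hδ'def
      have hδ'0 : 0 < δ' := by positivity
      have hδ'eq : lam * δ' = (1 - lam) * δ := by
        rw [hδ'def]; field_simp
      have hsum : a + δ' < b - ε / (1 - lam) - δ := by
        have e : lam * (δ' + δ) < lam * (b - a - ε / (1 - lam)) := by
          have e' : lam * (δ' + δ) = δ := by rw [mul_add, hδ'eq]; ring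
          rw [e']; exact hδm
        have := (mul_lt_mul_iff_right₀ hl0).mp e
        linarith
      refine ⟨Ioo (a + θ) ((a + δ') + θ), Ioo (a + θ) ((b - ε / (1 - lam) - δ) + θ),
        Ioo_subset_Ioo le_rfl (by linarith),
        hPpos _ _ le_rfl (by linarith) (by linarith), ?_, ?_⟩
      · rw [hPIoo _ _ (by linarith : a ≤ b - ε / (1 - lam) - δ)]
        exact hδL
      · intro m x hx0 hxT
        obtain ⟨i1, hi1⟩ := exists_iSup_eq x
        have hsup : (⨆ j, x j) < b - ε / (1 - lam) - δ + θ := by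
          rw [hi1]; have := (hxT i1).2; linarith
        have hinf : (⨅ j, x j) < (a + δ') + θ :=
          lt_of_le_of_lt (ciInf_le (Finite.bddBelow_range x) 0) hx0.2
        show lam * ((⨅ j, x j) - a) + (1 - lam) * ((⨆ j, x j) - b) < θ - ε
        have e1 : lam * ((⨅ j, x j) - a) < lam * (δ' + θ) :=
          mul_lt_mul_of_pos_left (by linarith) hl0
        have e1' : lam * (δ' + θ) = (1 - lam) * δ + lam * θ := by rw [mul_add, hδ'eq]
        have e2 : (1 - lam) * ((⨆ j, x j) - b) < (1 - lam) * (θ - ε / (1 - lam) - δ) :=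
          mul_lt_mul_of_pos_left (by linarith) h1l
        have e2' : (1 - lam) * (θ - ε / (1 - lam) - δ)
            = (1 - lam) * θ - ε - (1 - lam) * δ := by rw [mul_sub, mul_sub, hε1l]
        nlinarith [e1, e1', e2, e2']
  rw [hSm] at htminus
  refine ⟨htplus, htminus, ?_, ?_⟩
  · unfold betaPlus
    rw [← hPdef]
    exact htplus.liminf_eq
  · unfold betaMinus
    rw [← hPdef]
    exact htminus.liminf_eq
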